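/- Let n, N ≥ 1, L, σ ≥ 0, η > 0. Let f_1, …, f_n : ℝ^N → ℝ be differentiable with each ∇f_i L-Lipschitz. Let x_1, …, x_n, x'_1, …, x'_n ∈ ℝ^N, and let W ∈ ℝ^{n×n} be a symmetric doubly stochastic matrix (symmetric, nonnegative entries, row sums 1). Let μ be a probability measure on a measurable space Ω and let g_1, …, g_n, g'_1, …, g'_n : Ω → ℝ^N be square-integrable random vectors with ∫ ‖g_i − ∇f_i(x_i)‖² dμ ≤ σ² and ∫ ‖g'_i − ∇f_i(x'_i)‖² dμ ≤ σ² for each i. Let Q ∈ ℝ^{N×n} be the matrix whose i-th column is (x_i − x'_i)/η, and for each ω let G(ω), G'(ω) ∈ ℝ^{N×n} have i-th columns g_i(ω), g'_i(ω) respectively. Then ∫ ‖(−Q + G(ω) − G'(ω)) W‖_F² dμ(ω) ≤ 2(η^{−2} + 3L²) Σ_{i=1}^n ‖x_i − x'_i‖² + 12nσ². -/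

import Mathlib

open Finset MeasureTheory Matrix

private lemma eucl_norm_sq {N : ℕ} (v : EuclideanSpace ℝ (Fin N)) :
    ‖v‖ ^ 2 = ∑ j, (v j) ^ 2 := by
  rw [EuclideanSpace.norm_eq, Real.sq_sqrt (by positivity)]
  simp [sq_abs]

private lemma four_sq (a b c d : ℝ) :
    (a + b - c + d) ^ 2 ≤ 2 * a ^ 2 + 6 * b ^ 2 + 6 * c ^ 2 + 6 * d ^ 2 := by
  nlinarith [sq_nonneg (a - 3*b), sq_nonneg (a + 3*c), sq_nonneg (a - 3*d),
    sq_nonneg (b + c), sq_nonneg (b - d), sq_nonneg (c + d)]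

theorem stmt_17 (n N : ℕ) (hn : 1 ≤ n) (hN : 1 ≤ N)
    (L σ : ℝ) (hL : 0 ≤ L) (hσ : 0 ≤ σ) (η : ℝ) (hη : 0 < η)
    (f : Fin n → EuclideanSpace ℝ (Fin N) → ℝ)
    (hdiff : ∀ i, Differentiable ℝ (f i))
    (hLip : ∀ i x y, ‖gradient (f i) x - gradient (f i) y‖ ≤ L * ‖x - y‖)
    (x x' : Fin n → EuclideanSpace ℝ (Fin N))
    (W : Matrix (Fin n) (Fin n) ℝ)
    (hsymm : Wᵀ = W) (hWnonneg : ∀ i j, 0 ≤ W i j) (hWrow : ∀ i, ∑ j, W i j = 1)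
    {Ω : Type*} [MeasurableSpace Ω] (μ : Measure Ω) [IsProbabilityMeasure μ]
    (g g' : Fin n → Ω → EuclideanSpace ℝ (Fin N))
    (hg : ∀ i, MemLp (g i) 2 μ) (hg' : ∀ i, MemLp (g' i) 2 μ)
    (hgvar : ∀ i, ∫ ω, ‖g i ω - gradient (f i) (x i)‖ ^ 2 ∂μ ≤ σ ^ 2)
    (hg'var : ∀ i, ∫ ω, ‖g' i ω - gradient (f i) (x' i)‖ ^ 2 ∂μ ≤ σ ^ 2)
    (Q : Matrix (Fin N) (Fin n) ℝ) (hQ : Q = Matrix.of fun j i => (x i - x' i) j / η)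
    (G G' : Ω → Matrix (Fin N) (Fin n) ℝ)
    (hG : G = fun ω => Matrix.of fun j i => g i ω j)
    (hG' : G' = fun ω => Matrix.of fun j i => g' i ω j) :
    ∫ ω, ∑ j, ∑ i, (((-Q + G ω - G' ω) * W) j i) ^ 2 ∂μ ≤
      2 * (1 / η ^ 2 + 3 * L ^ 2) * ∑ i, ‖x i - x' i‖ ^ 2 + 12 * n * σ ^ 2 := by
  have hcolW : ∀ i, ∑ k, W k i = 1 := by
    intro i
    have : ∑ k, W k i = ∑ k, Wᵀ i k := by simp [Matrix.transpose_apply]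
    rw [this, hsymm]; exact hWrow i
  -- the bound function
  set B : Ω → ℝ := fun ω => ∑ i, ((2 / η ^ 2 + 6 * L ^ 2) * ‖x i - x' i‖ ^ 2
      + 6 * ‖g i ω - gradient (f i) (x i)‖ ^ 2
      + 6 * ‖g' i ω - gradient (f i) (x' i)‖ ^ 2) with hB
  have hInt1 : ∀ i : Fin n, Integrable (fun ω => ‖g i ω - gradient (f i) (x i)‖ ^ 2) μ :=
    fun i => (((hg i).sub (memLp_const _)).norm.integrable_sq)
  have hInt2 : ∀ i : Fin n, Integrable (fun ω => ‖g' i ω - gradient (f i) (x' i)‖ ^ 2) μ :=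
    fun i => (((hg' i).sub (memLp_const _)).norm.integrable_sq)
  have hIntB : Integrable B μ := by
    apply integrable_finset_sum
    intro i _
    exact ((integrable_const _).add ((hInt1 i).const_mul 6)).add ((hInt2 i).const_mul 6)
  -- pointwise bound
  have hpt : ∀ ω, ∑ j, ∑ i, (((-Q + G ω - G' ω) * W) j i) ^ 2 ≤ B ω := by
    intro ω
    set M : Matrix (Fin N) (Fin n) ℝ := -Q + G ω - G' ω with hM
    have step1 : ∑ j, ∑ i, ((M * W) j i) ^ 2 ≤ ∑ j, ∑ k, (M j k) ^ 2 := by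
      apply Finset.sum_le_sum
      intro j _
      have h1 : ∀ i : Fin n, ((M * W) j i) ^ 2 ≤ ∑ k, (M j k) ^ 2 * W k i := by
        intro i
        have hcs := Finset.sum_mul_sq_le_sq_mul_sq Finset.univ
          (fun k => Real.sqrt (W k i)) (fun k => Real.sqrt (W k i) * M j k)
        have e1 : ∀ k : Fin n, Real.sqrt (W k i) * (Real.sqrt (W k i) * M j k)
            = M j k * W k i := by
          intro k
          rw [← mul_assoc, Real.mul_self_sqrt (hWnonneg k i)]; ring
        have e2 : ∀ k : Fin n, Real.sqrt (W k i) ^ 2 = W k i :=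
          fun k => Real.sq_sqrt (hWnonneg k i)
        have e3 : ∀ k : Fin n, (Real.sqrt (W k i) * M j k) ^ 2 = (M j k) ^ 2 * W k i := by
          intro k; rw [mul_pow, e2]; ring
        simp only [e1, e3] at hcs
        calc ((M * W) j i) ^ 2 = (∑ k, M j k * W k i) ^ 2 := by rw [Matrix.mul_apply]
          _ ≤ (∑ k, W k i) * ∑ k, (M j k) ^ 2 * W k i := by
              simpa only [e2] using hcs
          _ = ∑ k, (M j k) ^ 2 * W k i := by rw [hcolW i, one_mul]
      calc ∑ i, ((M * W) j i) ^ 2 ≤ ∑ i, ∑ k, (M j k) ^ 2 * W k i :=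
            Finset.sum_le_sum fun i _ => h1 i
        _ = ∑ k, (M j k) ^ 2 * ∑ i, W k i := by
            rw [Finset.sum_comm]; simp [Finset.mul_sum]
        _ = ∑ k, (M j k) ^ 2 := by simp [hWrow]
    have step2 : ∀ i : Fin n, ∑ j, (M j i) ^ 2 ≤
        (2 / η ^ 2 + 6 * L ^ 2) * ‖x i - x' i‖ ^ 2
        + 6 * ‖g i ω - gradient (f i) (x i)‖ ^ 2
        + 6 * ‖g' i ω - gradient (f i) (x' i)‖ ^ 2 := by
      intro i
      have hMji : ∀ j, M j i = (-((x i - x' i) j / η))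
          + (g i ω - gradient (f i) (x i)) j
          - (g' i ω - gradient (f i) (x' i)) j
          + (gradient (f i) (x i) - gradient (f i) (x' i)) j := by
        intro j
        simp only [hM, hQ, hG, hG', Matrix.sub_apply, Matrix.add_apply, Matrix.neg_apply,
          Matrix.of_apply, PiLp.sub_apply]
        ring
      have hsum : ∑ j, (M j i) ^ 2 ≤
          ∑ j, (2 * ((x i - x' i) j / η) ^ 2
            + 6 * ((g i ω - gradient (f i) (x i)) j) ^ 2
            + 6 * ((g' i ω - gradient (f i) (x' i)) j) ^ 2
            + 6 * ((gradient (f i) (x i) - gradient (f i) (x' i)) j) ^ 2) := by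
        apply Finset.sum_le_sum
        intro j _
        rw [hMji j]
        have := four_sq (-((x i - x' i) j / η)) ((g i ω - gradient (f i) (x i)) j)
          ((g' i ω - gradient (f i) (x' i)) j)
          ((gradient (f i) (x i) - gradient (f i) (x' i)) j)
        nlinarith [this]
      have hgradb : ‖gradient (f i) (x i) - gradient (f i) (x' i)‖ ^ 2
          ≤ L ^ 2 * ‖x i - x' i‖ ^ 2 := by
        have h := hLip i (x i) (x' i)
        calc ‖gradient (f i) (x i) - gradient (f i) (x' i)‖ ^ 2
            ≤ (L * ‖x i - x' i‖) ^ 2 := by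
              apply pow_le_pow_left₀ (norm_nonneg _) h
          _ = L ^ 2 * ‖x i - x' i‖ ^ 2 := by ring
      calc ∑ j, (M j i) ^ 2
          ≤ ∑ j, (2 * ((x i - x' i) j / η) ^ 2
            + 6 * ((g i ω - gradient (f i) (x i)) j) ^ 2
            + 6 * ((g' i ω - gradient (f i) (x' i)) j) ^ 2
            + 6 * ((gradient (f i) (x i) - gradient (f i) (x' i)) j) ^ 2) := hsum
        _ = 2 / η ^ 2 * ‖x i - x' i‖ ^ 2
            + 6 * ‖g i ω - gradient (f i) (x i)‖ ^ 2
            + 6 * ‖g' i ω - gradient (f i) (x' i)‖ ^ 2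
            + 6 * ‖gradient (f i) (x i) - gradient (f i) (x' i)‖ ^ 2 := by
            have e : ∀ j : Fin N, 2 * ((x i - x' i) j / η) ^ 2
                = 2 / η ^ 2 * ((x i - x' i) j) ^ 2 := fun j => by ring
            simp only [e, eucl_norm_sq]
            rw [Finset.sum_add_distrib, Finset.sum_add_distrib, Finset.sum_add_distrib,
              ← Finset.mul_sum, ← Finset.mul_sum, ← Finset.mul_sum, ← Finset.mul_sum]
        _ ≤ (2 / η ^ 2 + 6 * L ^ 2) * ‖x i - x' i‖ ^ 2
            + 6 * ‖g i ω - gradient (f i) (x i)‖ ^ 2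
            + 6 * ‖g' i ω - gradient (f i) (x' i)‖ ^ 2 := by nlinarith [hgradb]
    calc ∑ j, ∑ i, ((M * W) j i) ^ 2 ≤ ∑ j, ∑ k, (M j k) ^ 2 := step1
      _ = ∑ k, ∑ j, (M j k) ^ 2 := Finset.sum_comm
      _ ≤ B ω := Finset.sum_le_sum fun i _ => step2 i
  -- integrate
  have hmono : ∫ ω, ∑ j, ∑ i, (((-Q + G ω - G' ω) * W) j i) ^ 2 ∂μ ≤ ∫ ω, B ω ∂μ := by
    apply integral_mono_of_nonneg
    · filter_upwards with ω
      positivity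
    · exact hIntB
    · filter_upwards with ω using hpt ω
  have hBint : ∫ ω, B ω ∂μ ≤ 2 * (1 / η ^ 2 + 3 * L ^ 2) * ∑ i, ‖x i - x' i‖ ^ 2
      + 12 * n * σ ^ 2 := by
    have hsplit : ∫ ω, B ω ∂μ = ∑ i : Fin n, ∫ ω, ((2 / η ^ 2 + 6 * L ^ 2) * ‖x i - x' i‖ ^ 2
        + 6 * ‖g i ω - gradient (f i) (x i)‖ ^ 2
        + 6 * ‖g' i ω - gradient (f i) (x' i)‖ ^ 2) ∂μ := by
      simp only [hB]
      exact integral_finset_sum _ (fun i _ =>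
        ((integrable_const _).add ((hInt1 i).const_mul 6)).add ((hInt2 i).const_mul 6))
    rw [hsplit]
    have hterm : ∀ i : Fin n, (∫ ω, ((2 / η ^ 2 + 6 * L ^ 2) * ‖x i - x' i‖ ^ 2
        + 6 * ‖g i ω - gradient (f i) (x i)‖ ^ 2
        + 6 * ‖g' i ω - gradient (f i) (x' i)‖ ^ 2) ∂μ)
        ≤ (2 / η ^ 2 + 6 * L ^ 2) * ‖x i - x' i‖ ^ 2 + 12 * σ ^ 2 := by
      intro i
      have hc : Integrable (fun _ : Ω => (2 / η ^ 2 + 6 * L ^ 2) * ‖x i - x' i‖ ^ 2) μ :=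
        integrable_const _
      have hu : Integrable (fun ω => 6 * ‖g i ω - gradient (f i) (x i)‖ ^ 2) μ :=
        (hInt1 i).const_mul 6
      have hv : Integrable (fun ω => 6 * ‖g' i ω - gradient (f i) (x' i)‖ ^ 2) μ :=
        (hInt2 i).const_mul 6
      have hcu : Integrable (fun ω => (2 / η ^ 2 + 6 * L ^ 2) * ‖x i - x' i‖ ^ 2
          + 6 * ‖g i ω - gradient (f i) (x i)‖ ^ 2) μ := hc.add hu
      rw [integral_add hcu hv, integral_add hc hu,
        integral_const, integral_const_mul, integral_const_mul]
      simp only [measure_univ, probReal_univ, ENNReal.toReal_one, smul_eq_mul, one_mul]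
      nlinarith [hgvar i, hg'var i]
    calc (∑ i : Fin n, ∫ ω, ((2 / η ^ 2 + 6 * L ^ 2) * ‖x i - x' i‖ ^ 2
          + 6 * ‖g i ω - gradient (f i) (x i)‖ ^ 2
          + 6 * ‖g' i ω - gradient (f i) (x' i)‖ ^ 2) ∂μ)
        ≤ ∑ i : Fin n, ((2 / η ^ 2 + 6 * L ^ 2) * ‖x i - x' i‖ ^ 2 + 12 * σ ^ 2) :=
          Finset.sum_le_sum fun i _ => hterm i
      _ = 2 * (1 / η ^ 2 + 3 * L ^ 2) * ∑ i, ‖x i - x' i‖ ^ 2 + 12 * n * σ ^ 2 := by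
          rw [Finset.sum_add_distrib, ← Finset.mul_sum]
          simp [Finset.card_univ]
          ring
  exact le_trans hmono hBint
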